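/- arXiv:2511.17451 — 2 statements merged into one kernel-verified Lean document; each statement's English description precedes it below -/
import Mathlib

section
/- The infimum over ℝ of |ψ^∞(x)|² = ψ₁^∞(x)² + ψ₂^∞(x)² equals (1/(4ω²))·(m²-2ω²)/2 if 0 < ω ≤ m/2, and (1/(4ω²))·(m-ω)² if m/2 ≤ ω < m; in particular this infimum is strictly positive. -/
open Real

lemma tanh_sq_lt_one' (y : ℝ) : Real.tanh y ^ 2 < 1 := by
  have hc := Real.cosh_pos y
  have h : Real.cosh y ^ 2 - Real.sinh y ^ 2 = 1 := Real.cosh_sq_sub_sinh_sq y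
  rw [Real.tanh_eq_sinh_div_cosh, div_pow, div_lt_one (by positivity)]
  nlinarith

lemma tanh_surj' {t : ℝ} (h1 : -1 < t) (h2 : t < 1) : ∃ y, Real.tanh y = t := by
  refine ⟨Real.log ((1 + t) / (1 - t)) / 2, ?_⟩
  set r := (1 + t) / (1 - t) with hr
  have hrpos : 0 < r := div_pos (by linarith) (by linarith)
  set u := Real.exp (Real.log r / 2) with hu
  have hu0 : 0 < u := Real.exp_pos _
  have huu : u * u = r := by
    rw [hu, ← Real.exp_add, show Real.log r / 2 + Real.log r / 2 = Real.log r by ring,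
      Real.exp_log hrpos]
  have hrt : u * u * (1 - t) = 1 + t := by
    rw [huu, hr, div_mul_eq_mul_div, mul_div_assoc, div_self (by linarith : (1:ℝ)-t ≠ 0), mul_one]
  rw [Real.tanh_eq_sinh_div_cosh, Real.sinh_eq, Real.cosh_eq, Real.exp_neg, ← hu]
  have hden : 0 < u + u⁻¹ := by positivity
  have hsimp : (u - u⁻¹) / 2 / ((u + u⁻¹) / 2) = (u - u⁻¹) / (u + u⁻¹) := by
    rw [div_div_div_comm]; norm_num
  rw [hsimp, div_eq_iff (ne_of_gt hden)]
  have hui : u * u⁻¹ = 1 := mul_inv_cancel₀ (ne_of_gt hu0)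
  nlinarith [hrt, hui, hu0]

lemma gbound1 (ν t : ℝ) (h0 : 0 < ν) (h1 : ν < 1) (ht : t ^ 2 < 1) :
    (4 - 4 * (1 - ν) - (1 - ν) ^ 2) / (8 * (1 - ν) ^ 2) ≤
      (ν * (1 - ν) ^ 2 * t ^ 2 + ν ^ 2 * (1 - t ^ 2) ^ 2) /
        ((1 - ν) ^ 2 * (1 - ν * t ^ 2) ^ 2) := by
  have ha : 0 < 1 - ν := by linarith
  have hd : 0 < 1 - ν * t ^ 2 := by nlinarith
  rw [div_le_div_iff₀ (by positivity) (by positivity)]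
  nlinarith [sq_nonneg ((1 - ν) * (4 * (1 - ν) - (3 - ν) * (1 - ν * t ^ 2))), sq_nonneg (1 - ν),
    sq_nonneg (1 - ν * t ^ 2)]

lemma gbound2 (ν t : ℝ) (h0 : 0 < ν) (h1 : ν < 1) (h3 : ν ≤ 1 / 3) (ht : t ^ 2 < 1) :
    ν ^ 2 / (1 - ν) ^ 2 ≤
      (ν * (1 - ν) ^ 2 * t ^ 2 + ν ^ 2 * (1 - t ^ 2) ^ 2) /
        ((1 - ν) ^ 2 * (1 - ν * t ^ 2) ^ 2) := by
  have ha : 0 < 1 - ν := by linarith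
  have hd : 0 < 1 - ν * t ^ 2 := by nlinarith
  have key : 0 ≤ ν * (1 - ν) * t ^ 2 * (1 - 3 * ν + ν * (1 + ν) * t ^ 2) := by
    have : 0 ≤ 1 - 3 * ν + ν * (1 + ν) * t ^ 2 := by nlinarith [sq_nonneg t]
    positivity
  rw [div_le_div_iff₀ (by positivity) (by positivity)]
  nlinarith [key, sq_nonneg (1 - ν), mul_pos ha ha]

set_option maxHeartbeats 1000000 in
theorem stmt5 (m ω κ ν : ℝ) (hm : 0 < m) (hω1 : 0 < ω) (hω2 : ω < m)
    (hκ : κ = Real.sqrt (m ^ 2 - ω ^ 2)) (hν : ν = (m - ω) / (m + ω))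
    (ψ1 ψ2 : ℝ → ℝ)
    (hψ1 : ∀ x, ψ1 x = Real.sqrt ν * Real.tanh (κ * x) / (1 - ν * Real.tanh (κ * x) ^ 2))
    (hψ2 : ∀ x, ψ2 x = -(ν / (1 - ν)) * (1 - Real.tanh (κ * x) ^ 2) / (1 - ν * Real.tanh (κ * x) ^ 2)) :
    (ω ≤ m / 2 → (⨅ x, ψ1 x ^ 2 + ψ2 x ^ 2) = 1 / (4 * ω ^ 2) * ((m ^ 2 - 2 * ω ^ 2) / 2)) ∧
      (m / 2 ≤ ω → (⨅ x, ψ1 x ^ 2 + ψ2 x ^ 2) = 1 / (4 * ω ^ 2) * (m - ω) ^ 2) ∧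
      0 < ⨅ x, ψ1 x ^ 2 + ψ2 x ^ 2 := by
  have hmω : (0:ℝ) < m + ω := by linarith
  have hν0 : 0 < ν := by rw [hν]; exact div_pos (by linarith) hmω
  have hν1 : ν < 1 := by rw [hν, div_lt_one hmω]; linarith
  have ha : 0 < 1 - ν := by linarith
  have hκ0 : 0 < κ := by
    rw [hκ]; apply Real.sqrt_pos.2; nlinarith
  have hsν : Real.sqrt ν ^ 2 = ν := Real.sq_sqrt hν0.le
  have hrep : ∀ x, ψ1 x ^ 2 + ψ2 x ^ 2 =
      (ν * (1 - ν) ^ 2 * Real.tanh (κ * x) ^ 2 + ν ^ 2 * (1 - Real.tanh (κ * x) ^ 2) ^ 2) /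
        ((1 - ν) ^ 2 * (1 - ν * Real.tanh (κ * x) ^ 2) ^ 2) := by
    intro x
    set t := Real.tanh (κ * x) with htt
    have ht : t ^ 2 < 1 := tanh_sq_lt_one' (κ * x)
    have hane : (1 - ν) ≠ 0 := ne_of_gt ha
    have hd : (1 - ν * t ^ 2) ≠ 0 := by nlinarith
    rw [hψ1 x, hψ2 x, ← htt]
    rw [div_pow, div_pow, mul_pow, mul_pow, hsν, neg_sq, div_pow]
    field_simp
  have hbdd : BddBelow (Set.range fun x => ψ1 x ^ 2 + ψ2 x ^ 2) := by
    refine ⟨0, ?_⟩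
    rintro y ⟨x, rfl⟩
    positivity
  have hcase1 : ω ≤ m / 2 → (⨅ x, ψ1 x ^ 2 + ψ2 x ^ 2) =
      1 / (4 * ω ^ 2) * ((m ^ 2 - 2 * ω ^ 2) / 2) := by
    intro hle
    have hν3 : 1 / 3 ≤ ν := by
      rw [hν, le_div_iff₀ hmω]; linarith
    have hV : 1 / (4 * ω ^ 2) * ((m ^ 2 - 2 * ω ^ 2) / 2) =
        (4 - 4 * (1 - ν) - (1 - ν) ^ 2) / (8 * (1 - ν) ^ 2) := by
      rw [hν]
      have hω0 : ω ≠ 0 := ne_of_gt hω1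
      field_simp
      ring_nf
      field_simp
    set s : ℝ := (3 * ν - 1) / (ν * (3 - ν)) with hs
    have hden : 0 < ν * (3 - ν) := by nlinarith
    have hs0 : 0 ≤ s := div_nonneg (by linarith) hden.le
    have hs1 : s < 1 := by
      rw [hs, div_lt_one hden]; nlinarith
    set tstar : ℝ := Real.sqrt s with hts
    have hts2 : tstar ^ 2 = s := Real.sq_sqrt hs0
    have htslt : tstar < 1 := by
      rw [hts]
      calc Real.sqrt s < Real.sqrt 1 := Real.sqrt_lt_sqrt hs0 (by linarith)
        _ = 1 := Real.sqrt_one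
    have htsgt : -1 < tstar := by
      have := Real.sqrt_nonneg s; rw [hts]; linarith
    obtain ⟨y, hy⟩ := tanh_surj' htsgt htslt
    refine le_antisymm ?_ ?_
    · have hxval : ψ1 (y / κ) ^ 2 + ψ2 (y / κ) ^ 2 =
          1 / (4 * ω ^ 2) * ((m ^ 2 - 2 * ω ^ 2) / 2) := by
        rw [hrep, hV]
        rw [mul_div_cancel₀ _ (ne_of_gt hκ0), hy, hts2]
        have hds : 0 < 1 - ν * s := by nlinarith
        rw [eq_comm, div_eq_div_iff (by positivity) (by positivity)]
        rw [hs]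
        have hνne : ν ≠ 0 := ne_of_gt hν0
        have h3ν : (3 - ν) ≠ 0 := by nlinarith
        field_simp
        ring
      calc (⨅ x, ψ1 x ^ 2 + ψ2 x ^ 2) ≤ ψ1 (y / κ) ^ 2 + ψ2 (y / κ) ^ 2 := ciInf_le hbdd _
        _ = _ := hxval
    · apply le_ciInf
      intro x
      rw [hrep, hV]
      exact gbound1 ν _ hν0 hν1 (tanh_sq_lt_one' _)
  have hcase2 : m / 2 ≤ ω → (⨅ x, ψ1 x ^ 2 + ψ2 x ^ 2) =
      1 / (4 * ω ^ 2) * (m - ω) ^ 2 := by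
    intro hle
    have hν3 : ν ≤ 1 / 3 := by
      rw [hν, div_le_iff₀ hmω]; linarith
    have hV : 1 / (4 * ω ^ 2) * (m - ω) ^ 2 = ν ^ 2 / (1 - ν) ^ 2 := by
      rw [hν]
      have h : 1 - (m - ω) / (m + ω) = 2 * ω / (m + ω) := by field_simp; ring
      rw [h, div_pow, div_pow,
        div_div_div_cancel_right₀ (by positivity : ((m + ω):ℝ) ^ 2 ≠ 0)]
      ring
    refine le_antisymm ?_ ?_
    · have hxval : ψ1 0 ^ 2 + ψ2 0 ^ 2 = 1 / (4 * ω ^ 2) * (m - ω) ^ 2 := by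
        rw [hrep, hV]
        simp [Real.tanh_zero]
      calc (⨅ x, ψ1 x ^ 2 + ψ2 x ^ 2) ≤ ψ1 0 ^ 2 + ψ2 0 ^ 2 := ciInf_le hbdd _
        _ = _ := hxval
    · apply le_ciInf
      intro x
      rw [hrep, hV]
      exact gbound2 ν _ hν0 hν1 hν3 (tanh_sq_lt_one' _)
  refine ⟨hcase1, hcase2, ?_⟩
  rcases le_total ω (m / 2) with h | h
  · rw [hcase1 h]
    have h2 : 0 < m ^ 2 - 2 * ω ^ 2 := by nlinarith
    positivity
  · rw [hcase2 h]
    have h2 : m - ω ≠ 0 := by intro hc; nlinarith [sub_eq_zero.1 hc]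
    positivity
end

section
/- The supremum of |ψ^∞| over ℝ equals √(m²-ω²)/(2ω), and the L¹-norm of the threshold energy density ℰ equals ((m²-ω²)/(4ω²))·log((m + √(m²-ω²))/ω). -/
set_option maxHeartbeats 1000000
open Real Filter Topology MeasureTheory Set

lemma my_tanh_sq_lt_one (x : ℝ) : Real.tanh x ^ 2 < 1 := by
  have hc := Real.cosh_pos x
  rw [Real.tanh_eq_sinh_div_cosh, div_pow, div_lt_one (by positivity)]
  nlinarith [Real.cosh_sq x]

lemma my_hasDerivAt_tanh (x : ℝ) : HasDerivAt Real.tanh (1 - Real.tanh x ^ 2) x := by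
  have hc := Real.cosh_pos x
  have h := (Real.hasDerivAt_sinh x).div (Real.hasDerivAt_cosh x) hc.ne'
  have hfun : Real.tanh = fun y => Real.sinh y / Real.cosh y := by
    funext y; exact Real.tanh_eq_sinh_div_cosh y
  rw [hfun]
  refine h.congr_deriv ?_
  rw [div_pow]
  field_simp

lemma my_tendsto_tanh_atTop : Tendsto Real.tanh atTop (𝓝 1) := by
  have h0 : Tendsto (fun x : ℝ => Real.exp (-(2 * x))) atTop (𝓝 0) := by
    have h2t : Tendsto (fun x : ℝ => 2 * x) atTop atTop := by
      simpa using tendsto_id.const_mul_atTop (show (0:ℝ) < 2 by norm_num)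
    exact Real.tendsto_exp_neg_atTop_nhds_zero.comp h2t
  have h : Tendsto (fun x : ℝ => (1 - Real.exp (-(2 * x))) / (1 + Real.exp (-(2 * x))))
      atTop (𝓝 1) := by
    have := ((tendsto_const_nhds (x := (1:ℝ)) (f := atTop)).sub h0).div
      ((tendsto_const_nhds (x := (1:ℝ)) (f := atTop)).add h0) (by norm_num)
    simpa [Pi.div_def] using this
  refine h.congr fun x => ?_
  have he := Real.exp_pos x
  have h1 : (0:ℝ) < Real.exp x + (Real.exp x)⁻¹ := by positivity
  have h2 : (0:ℝ) < 1 + (Real.exp x)⁻¹ * (Real.exp x)⁻¹ := by positivity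
  rw [Real.tanh_eq_sinh_div_cosh, Real.sinh_eq, Real.cosh_eq,
    show -(2 * x) = -x + -x by ring, Real.exp_add, Real.exp_neg]
  rw [div_div_div_eq]
  field_simp

theorem stmt7 (m ω κ ν : ℝ) (hm : 0 < m) (hω1 : 0 < ω) (hω2 : ω < m)
    (hκ : κ = Real.sqrt (m ^ 2 - ω ^ 2)) (hν : ν = (m - ω) / (m + ω))
    (g W ψ1 ψ2 E : ℝ → ℝ)
    (hg : ∀ x, g x = (m - ω) * (1 - Real.tanh (κ * x) ^ 2) / (1 - ν * Real.tanh (κ * x) ^ 2))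
    (hW : ∀ x, W x = m - g x)
    (hψ1 : ∀ x, ψ1 x = Real.sqrt ν * Real.tanh (κ * x) / (1 - ν * Real.tanh (κ * x) ^ 2))
    (hψ2 : ∀ x, ψ2 x = -(ν / (1 - ν)) * (1 - Real.tanh (κ * x) ^ 2) / (1 - ν * Real.tanh (κ * x) ^ 2))
    (hE : ∀ x, E x = m * (ψ1 x ^ 2 + ψ2 x ^ 2) - W x * (ψ1 x ^ 2 - ψ2 x ^ 2)) :
    (⨆ x, Real.sqrt (ψ1 x ^ 2 + ψ2 x ^ 2)) = Real.sqrt (m ^ 2 - ω ^ 2) / (2 * ω) ∧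
      ∫ x, E x = (m ^ 2 - ω ^ 2) / (4 * ω ^ 2) * Real.log ((m + Real.sqrt (m ^ 2 - ω ^ 2)) / ω) := by
  have hmw : (0:ℝ) < m + ω := by linarith
  have hmw' : (0:ℝ) < m - ω := by linarith
  have hsqpos : (0:ℝ) < m ^ 2 - ω ^ 2 := by nlinarith
  have hν0 : 0 < ν := hν ▸ div_pos hmw' hmw
  have hν1 : ν < 1 := hν ▸ (div_lt_one hmw).2 (by linarith)
  have hb : (0:ℝ) < 1 - ν := by linarith
  have hκpos : 0 < κ := hκ ▸ Real.sqrt_pos.2 hsqpos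
  have hκ2 : κ ^ 2 = m ^ 2 - ω ^ 2 := by rw [hκ]; exact Real.sq_sqrt hsqpos.le
  set s := Real.sqrt ν with hsdef
  have hs2 : s ^ 2 = ν := Real.sq_sqrt hν0.le
  have hs0 : 0 < s := Real.sqrt_pos.2 hν0
  have hs2' : s ^ 2 * (m + ω) = m - ω := by rw [hs2, hν]; field_simp
  have hκeq : κ = (m + ω) * s := by
    rw [hκ, show m ^ 2 - ω ^ 2 = (m + ω) ^ 2 * ν by rw [hν]; field_simp; ring,
      Real.sqrt_mul (by positivity), Real.sqrt_sq hmw.le]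
  have hκs : κ * s = m - ω := by
    calc κ * s = s ^ 2 * (m + ω) := by rw [hκeq]; ring
    _ = m - ω := hs2'
  have hs1 : s < 1 := by nlinarith
  have htt : ∀ x : ℝ, Real.tanh (κ * x) ^ 2 < 1 := fun x => my_tanh_sq_lt_one _
  have hD : ∀ x : ℝ, 0 < 1 - ν * Real.tanh (κ * x) ^ 2 := by
    intro x
    nlinarith [htt x, sq_nonneg (Real.tanh (κ * x))]
  -- key algebraic identities
  have hA : ∀ x : ℝ, ψ1 x ^ 2 + ψ2 x ^ 2
      = ν / (1 - ν) ^ 2 - ν * (1 - Real.tanh (κ * x) ^ 2) * (1 + ν * Real.tanh (κ * x) ^ 2)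
        / ((1 - ν) * (1 - ν * Real.tanh (κ * x) ^ 2) ^ 2) := by
    intro x
    have hd := hD x
    rw [hψ1, hψ2, div_pow, mul_pow, Real.sq_sqrt hν0.le]
    field_simp
    ring
  have hEid : ∀ x : ℝ, E x = (m ^ 2 - ω ^ 2) / (4 * ω ^ 2)
      * ((m - ω) * (1 - Real.tanh (κ * x) ^ 2) / (1 - ν * Real.tanh (κ * x) ^ 2)) := by
    intro x
    have hm' : m = κ * (1 + s ^ 2) / (2 * s) := by
      rw [eq_div_iff (by positivity : (2:ℝ) * s ≠ 0)]
      linear_combination -hκeq - s * hκs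
    have hω' : ω = κ * (1 - s ^ 2) / (2 * s) := by
      rw [eq_div_iff (by positivity : (2:ℝ) * s ≠ 0)]
      linear_combination -hκeq + s * hκs
    have hd' : (1:ℝ) - s ^ 2 * Real.tanh (κ * x) ^ 2 ≠ 0 := by
      rw [hs2]; exact (hD x).ne'
    have hbs : (1:ℝ) - s ^ 2 ≠ 0 := by rw [hs2]; exact hb.ne'
    have hων : (0:ℝ) < 1 - s ^ 2 := by rw [hs2]; exact hb
    rw [hE, hW, hg, hψ1, hψ2, show ν = s ^ 2 from hs2.symm,
      show m - ω = κ * s from hκs.symm]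
    rw [hm', hω']
    field_simp
    ring
  have htan : Tendsto (fun x => Real.tanh (κ * x)) atTop (𝓝 1) := by
    have h2t : Tendsto (fun x : ℝ => κ * x) atTop atTop := by
      simpa using tendsto_id.const_mul_atTop hκpos
    exact my_tendsto_tanh_atTop.comp h2t
  have hBs : Real.sqrt (ν / (1 - ν) ^ 2) = κ / (2 * ω) := by
    rw [show ν / (1 - ν) ^ 2 = (κ / (2 * ω)) ^ 2 by
      rw [hν, div_pow, hκ2]; field_simp [hω1.ne']; ring]
    exact Real.sqrt_sq (by positivity)
  constructor
  · rw [← hκ]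
    have hub : ∀ x : ℝ, Real.sqrt (ψ1 x ^ 2 + ψ2 x ^ 2) ≤ κ / (2 * ω) := by
      intro x
      rw [← hBs]
      apply Real.sqrt_le_sqrt
      rw [hA x]
      have h1 : (0:ℝ) ≤ 1 - Real.tanh (κ * x) ^ 2 := by nlinarith [htt x]
      have h2 : (0:ℝ) ≤ 1 + ν * Real.tanh (κ * x) ^ 2 := by positivity
      have h3 : (0:ℝ) ≤ ν * (1 - Real.tanh (κ * x) ^ 2) * (1 + ν * Real.tanh (κ * x) ^ 2)
          / ((1 - ν) * (1 - ν * Real.tanh (κ * x) ^ 2) ^ 2) :=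
        div_nonneg (mul_nonneg (mul_nonneg hν0.le h1) h2)
          (mul_nonneg hb.le (sq_nonneg _))
      linarith
    have hlow : Tendsto (fun x => Real.sqrt (ψ1 x ^ 2 + ψ2 x ^ 2)) atTop (𝓝 (κ / (2 * ω))) := by
      have hq : Tendsto (fun x => ν / (1 - ν) ^ 2
          - ν * (1 - Real.tanh (κ * x) ^ 2) * (1 + ν * Real.tanh (κ * x) ^ 2)
            / ((1 - ν) * (1 - ν * Real.tanh (κ * x) ^ 2) ^ 2)) atTop (𝓝 (ν / (1 - ν) ^ 2)) := by
        have hnum : Tendsto (fun x => ν * (1 - Real.tanh (κ * x) ^ 2)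
              * (1 + ν * Real.tanh (κ * x) ^ 2)) atTop
              (𝓝 (ν * (1 - 1 ^ 2) * (1 + ν * 1 ^ 2))) :=
          (tendsto_const_nhds.mul (tendsto_const_nhds.sub (htan.pow 2))).mul
            (tendsto_const_nhds.add (tendsto_const_nhds.mul (htan.pow 2)))
        have hden : Tendsto (fun x => (1 - ν) * (1 - ν * Real.tanh (κ * x) ^ 2) ^ 2) atTop
              (𝓝 ((1 - ν) * (1 - ν * 1 ^ 2) ^ 2)) :=
          tendsto_const_nhds.mul
            ((tendsto_const_nhds.sub (tendsto_const_nhds.mul (htan.pow 2))).pow 2)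
        have hd0 : ((1:ℝ) - ν) * (1 - ν * 1 ^ 2) ^ 2 ≠ 0 := by
          have h' : ((1:ℝ) - ν) * (1 - ν * 1 ^ 2) ^ 2 = (1 - ν) ^ 3 := by ring
          rw [h']; exact (pow_pos hb 3).ne'
        have := (tendsto_const_nhds (x := ν / (1 - ν) ^ 2) (f := (atTop : Filter ℝ))).sub (hnum.div hden hd0)
        convert this using 2
        · norm_num
        · norm_num
      have hcomp := (Real.continuous_sqrt.tendsto _).comp hq
      rw [hBs] at hcomp
      refine hcomp.congr fun x => ?_
      simp only [Function.comp]
      rw [← hA x]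
    have hbdd : BddAbove (Set.range fun x => Real.sqrt (ψ1 x ^ 2 + ψ2 x ^ 2)) := by
      refine ⟨κ / (2 * ω), ?_⟩
      rintro y ⟨x, rfl⟩
      exact hub x
    apply le_antisymm
    · exact ciSup_le hub
    · exact le_of_tendsto hlow (Filter.Eventually.of_forall fun x => le_ciSup hbdd x)
  · rw [← hκ]
    set c2 : ℝ := (m ^ 2 - ω ^ 2) / (8 * ω ^ 2) with hc2
    set F : ℝ → ℝ := fun x => c2 * (Real.log (1 + s * Real.tanh (κ * x))
      - Real.log (1 - s * Real.tanh (κ * x))) with hF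
    have habs : ∀ x : ℝ, |s * Real.tanh (κ * x)| < 1 := by
      intro x
      have h1 := htt x
      have h2 : |Real.tanh (κ * x)| ≤ 1 := by nlinarith [abs_nonneg (Real.tanh (κ*x)), sq_abs (Real.tanh (κ*x))]
      rw [abs_mul, abs_of_pos hs0]
      nlinarith [abs_nonneg (Real.tanh (κ * x))]
    have hp1 : ∀ x : ℝ, (0:ℝ) < 1 + s * Real.tanh (κ * x) := by
      intro x; have := abs_lt.1 (habs x); linarith [this.1]
    have hp2 : ∀ x : ℝ, (0:ℝ) < 1 - s * Real.tanh (κ * x) := by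
      intro x; have := abs_lt.1 (habs x); linarith [this.2]
    have hderiv : ∀ x : ℝ, HasDerivAt F (E x) x := by
      intro x
      have h1 : HasDerivAt (fun y => Real.tanh (κ * y))
          ((1 - Real.tanh (κ * x) ^ 2) * κ) x := by
        have hid : HasDerivAt (fun y : ℝ => κ * y) κ x := by
          simpa using (hasDerivAt_id x).const_mul κ
        exact (my_hasDerivAt_tanh (κ * x)).comp x hid
      have h2 : HasDerivAt (fun y => 1 + s * Real.tanh (κ * y))
          (s * ((1 - Real.tanh (κ * x) ^ 2) * κ)) x := (h1.const_mul s).const_add 1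
      have h3 : HasDerivAt (fun y => 1 - s * Real.tanh (κ * y))
          (-(s * ((1 - Real.tanh (κ * x) ^ 2) * κ))) x := (h1.const_mul s).const_sub 1
      have h4 := ((h2.log (hp1 x).ne').sub (h3.log (hp2 x).ne')).const_mul c2
      refine h4.congr_deriv ?_
      rw [hEid x, hc2]
      have hd : (1:ℝ) - s ^ 2 * Real.tanh (κ * x) ^ 2 ≠ 0 := by
        rw [hs2]; exact (hD x).ne'
      rw [show m - ω = κ * s from hκs.symm, show ν = s ^ 2 from hs2.symm]
      field_simp [hd, (hp1 x).ne', (hp2 x).ne']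
      ring
    have hF0 : F 0 = 0 := by
      simp [hF, Real.tanh_zero]
    have hFtop : Tendsto F atTop (𝓝 (c2 * (Real.log (1 + s) - Real.log (1 - s)))) := by
      have hl1 : Tendsto (fun x => Real.log (1 + s * Real.tanh (κ * x))) atTop
          (𝓝 (Real.log (1 + s))) := by
        have hin : Tendsto (fun x => 1 + s * Real.tanh (κ * x)) atTop (𝓝 (1 + s)) := by
          have := (tendsto_const_nhds (x := (1:ℝ)) (f := (atTop : Filter ℝ))).add
            ((tendsto_const_nhds (x := s) (f := (atTop : Filter ℝ))).mul htan)
          simpa using this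
        exact ((Real.continuousAt_log (by nlinarith)).tendsto.comp hin)
      have hl2 : Tendsto (fun x => Real.log (1 - s * Real.tanh (κ * x))) atTop
          (𝓝 (Real.log (1 - s))) := by
        have hin : Tendsto (fun x => 1 - s * Real.tanh (κ * x)) atTop (𝓝 (1 - s)) := by
          have := (tendsto_const_nhds (x := (1:ℝ)) (f := (atTop : Filter ℝ))).sub
            ((tendsto_const_nhds (x := s) (f := (atTop : Filter ℝ))).mul htan)
          simpa using this
        exact ((Real.continuousAt_log (by nlinarith)).tendsto.comp hin)
      exact tendsto_const_nhds.mul (hl1.sub hl2)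
    have hnonneg : ∀ x : ℝ, 0 ≤ E x := by
      intro x
      rw [hEid x]
      have h1 : (0:ℝ) ≤ 1 - Real.tanh (κ * x) ^ 2 := by nlinarith [htt x]
      exact mul_nonneg (by positivity)
        (div_nonneg (mul_nonneg hmw'.le h1) (hD x).le)
    have hIoi : ∫ x in Ioi (0:ℝ), E x = c2 * (Real.log (1 + s) - Real.log (1 - s)) - F 0 :=
      integral_Ioi_of_hasDerivAt_of_nonneg' (fun x _ => hderiv x) (fun x _ => hnonneg x) hFtop
    have hInt : IntegrableOn E (Ioi (0:ℝ)) :=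
      integrableOn_Ioi_deriv_of_nonneg' (fun x _ => hderiv x) (fun x _ => hnonneg x) hFtop
    have hEeven : ∀ x : ℝ, E (-x) = E x := by
      intro x
      rw [hEid, hEid, show κ * (-x) = -(κ * x) by ring, Real.tanh_neg]
      ring
    have hIic : ∫ x in Iic (0:ℝ), E x = ∫ x in Ioi (0:ℝ), E x := by
      have h := integral_comp_neg_Iic (0:ℝ) E
      simp only [hEeven, neg_zero] at h
      exact h
    have hIntIic : IntegrableOn E (Iic (0:ℝ)) := by
      have hemb : MeasurableEmbedding (fun x : ℝ => -x) :=
        (Homeomorph.neg ℝ).isClosedEmbedding.measurableEmbedding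
      have hpre : (fun x : ℝ => -x) ⁻¹' (Iic 0) = Ici 0 := by
        ext y; simp
      have hres : volume.restrict (Iic (0:ℝ))
          = Measure.map (fun x : ℝ => -x) (volume.restrict (Ici 0)) := by
        conv_lhs => rw [← Measure.map_neg_eq_self (volume : Measure ℝ)]
        rw [Measure.restrict_map hemb.measurable measurableSet_Iic, hpre]
      rw [IntegrableOn, hres, hemb.integrable_map_iff]
      have : (E ∘ fun x : ℝ => -x) = E := funext fun x => hEeven x
      rw [this]
      exact (integrableOn_Ici_iff_integrableOn_Ioi (by simp)).2 hInt
    rw [← intervalIntegral.integral_Iic_add_Ioi hIntIic hInt, hIic, hIoi, hF0, sub_zero]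
    have hlog : Real.log (1 + s) - Real.log (1 - s) = Real.log ((m + κ) / ω) := by
      rw [← Real.log_div (by positivity) (by nlinarith : (1:ℝ) - s ≠ 0)]
      congr 1
      rw [div_eq_div_iff (by nlinarith : (1:ℝ) - s ≠ 0) hω1.ne']
      linear_combination (s - 1) * hκeq + hs2'
    rw [hlog, hc2]
    ring
end
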